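/- For positive definite n×n real symmetric matrices A and B and any t ∈ [0,1]: log det(tA + (1-t)B) ≤ t·log det(A) + (1-t)·log det(B) + [t(1-t)/(2·min{λmin(A)², λmin(B)²})]·‖A-B‖_F², where λmin denotes the smallest eigenvalue. -/

import Mathlib

open Matrix Polynomial

namespace Stmt5Aux

variable {n : ℕ}

lemma psd_trace_nonneg (P : Matrix (Fin n) (Fin n) ℝ) (hP : P.PosSemidef) :
    0 ≤ P.trace := by
  rw [Matrix.trace]
  refine Finset.sum_nonneg fun i _ => ?_
  have := hP.dotProduct_mulVec_nonneg (Pi.single i 1)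
  simpa [Matrix.mulVec_single, Matrix.diag] using this

open scoped MatrixOrder in
lemma psd_trace_mul_nonneg {P Q : Matrix (Fin n) (Fin n) ℝ}
    (hP : P.PosSemidef) (hQ : Q.PosSemidef) : 0 ≤ (P * Q).trace := by
  have hS := (CFC.sqrt_nonneg P).posSemidef
  have h1 : P * Q = CFC.sqrt P * (CFC.sqrt P * Q) := by rw [← mul_assoc, CFC.sqrt_mul_sqrt_self P hP.nonneg]
  rw [h1, Matrix.trace_mul_comm, mul_assoc]
  have h2 : (CFC.sqrt P * Q * CFC.sqrt P).PosSemidef := by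
    have := hQ.conjTranspose_mul_mul_same (CFC.sqrt P)
    rwa [hS.isHermitian.eq] at this
  exact psd_trace_nonneg _ (by rwa [mul_assoc] at h2)

lemma psd_smul {P : Matrix (Fin n) (Fin n) ℝ} (hP : P.PosSemidef) {c : ℝ} (hc : 0 ≤ c) :
    (c • P).PosSemidef := by
  refine Matrix.PosSemidef.of_dotProduct_mulVec_nonneg ?_ ?_
  · show (c • P)ᴴ = c • P
    rw [Matrix.conjTranspose_smul, hP.1.eq]
    simp
  · intro x
    have := hP.dotProduct_mulVec_nonneg x
    rw [Matrix.smul_mulVec, dotProduct_smul]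
    exact mul_nonneg hc this

lemma sub_inf_smul_posSemidef [NeZero n] {A : Matrix (Fin n) (Fin n) ℝ} (hA : A.IsHermitian) :
    (A - (⨅ i, hA.eigenvalues i) • 1).PosSemidef := by
  set c : ℝ := ⨅ i, hA.eigenvalues i with hc
  have hU := hA.spectral_theorem
  set U : Matrix (Fin n) (Fin n) ℝ := (hA.eigenvectorUnitary : Matrix (Fin n) (Fin n) ℝ) with hUdef
  have hone : U * Uᴴ = 1 := by
    have := (Matrix.mem_unitaryGroup_iff).mp hA.eigenvectorUnitary.2
    simpa [star_eq_conjTranspose] using this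
  have hdiag : (diagonal (RCLike.ofReal ∘ hA.eigenvalues) : Matrix (Fin n) (Fin n) ℝ) - c • 1
      = diagonal (fun i => hA.eigenvalues i - c) := by
    ext i j
    by_cases h : i = j <;> simp [Matrix.diagonal_apply, Matrix.one_apply, h, RCLike.ofReal]
  have key : A - c • 1 = U * (diagonal (fun i => hA.eigenvalues i - c)) * Uᴴ := by
    rw [← hdiag, Matrix.mul_sub, Matrix.sub_mul, Matrix.mul_smul, Matrix.smul_mul,
      Matrix.mul_one, hone]
    congr 1
  rw [key]
  refine Matrix.PosSemidef.mul_mul_conjTranspose_same ?_ U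
  refine Matrix.posSemidef_diagonal_iff.mpr fun i => ?_
  have : c ≤ hA.eigenvalues i := ciInf_le (Finite.bddBelow_range _) i
  simpa using this

open scoped MatrixOrder in
lemma inv_le_of_le {M : Matrix (Fin n) (Fin n) ℝ} (hM : M.PosDef) {m : ℝ} (hm : 0 < m)
    (h : (M - m • 1).PosSemidef) : ((1/m) • 1 - M⁻¹).PosSemidef := by
  set S := CFC.sqrt M with hSdef
  have hS : S.PosSemidef := (CFC.sqrt_nonneg M).posSemidef
  have hSS : S * S = M := CFC.sqrt_mul_sqrt_self M hM.posSemidef.nonneg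
  have hdetS : IsUnit S.det := by
    have : S.det * S.det = M.det := by rw [← det_mul, hSS]
    exact isUnit_iff_ne_zero.mpr (fun hz => by simp [hz] at this; exact ne_of_gt hM.det_pos this.symm)
  have hSinv : S⁻¹ᴴ = S⁻¹ := hS.isHermitian.inv.eq
  have key : S⁻¹ᴴ * (M - m • 1) * S⁻¹ = 1 - m • M⁻¹ := by
    rw [hSinv, Matrix.mul_sub, Matrix.sub_mul]
    rw [← hSS]
    have h1 : S⁻¹ * (S * S) * S⁻¹ = 1 := by
      rw [← mul_assoc, Matrix.nonsing_inv_mul S hdetS, Matrix.one_mul,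
        Matrix.mul_nonsing_inv S hdetS]
    have h2 : S⁻¹ * (m • 1) * S⁻¹ = m • (S * S)⁻¹ := by
      rw [Matrix.mul_smul, Matrix.mul_one, Matrix.smul_mul, Matrix.mul_inv_rev]
    rw [h1, h2]
  have hpsd : (1 - m • M⁻¹ : Matrix (Fin n) (Fin n) ℝ).PosSemidef := by
    rw [← key]; exact h.conjTranspose_mul_mul_same S⁻¹
  have := psd_smul hpsd (le_of_lt (by positivity : (0:ℝ) < 1/m))
  have heq : (1/m) • (1 - m • M⁻¹ : Matrix (Fin n) (Fin n) ℝ) = (1/m) • 1 - M⁻¹ := by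
    rw [smul_sub, smul_smul]
    congr 1
    rw [one_div, inv_mul_cancel₀ (ne_of_gt hm), one_smul]
  rwa [heq] at this

lemma trace_inv_mul_le {M Q : Matrix (Fin n) (Fin n) ℝ} (hM : M.PosDef) {m : ℝ} (hm : 0 < m)
    (h : (M - m • 1).PosSemidef) (hQ : Q.PosSemidef) :
    (M⁻¹ * Q).trace ≤ (1/m) * Q.trace := by
  have h0 := psd_trace_mul_nonneg (inv_le_of_le hM hm h) hQ
  have hexp : ((1/m) • 1 - M⁻¹) * Q = (1/m) • Q - M⁻¹ * Q := by
    rw [Matrix.sub_mul, Matrix.smul_mul, Matrix.one_mul]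
  rw [hexp, Matrix.trace_sub, Matrix.trace_smul, smul_eq_mul] at h0
  linarith

lemma hasDerivAt_det_affine (B D : Matrix (Fin n) (Fin n) ℝ) (s₀ : ℝ)
    (hdet : IsUnit (B + s₀ • D).det) :
    HasDerivAt (fun s => (B + s • D).det)
      ((B + s₀ • D).det * ((B + s₀ • D)⁻¹ * D).trace) s₀ := by
  set M := B + s₀ • D with hM
  set N := M⁻¹ * D with hN
  set p : ℝ[X] := (Matrix.det (1 + (X : ℝ[X]) • N.map C)).divX.divX with hp
  have key : ∀ s : ℝ, (B + s • D).det
      = M.det * (1 + N.trace * (s - s₀) + p.eval (s - s₀) * (s - s₀)^2) := by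
    intro s
    have hMD : M * ((s - s₀) • N) = (s - s₀) • D := by
      rw [Matrix.mul_smul, hN, ← mul_assoc, Matrix.mul_nonsing_inv _ hdet, Matrix.one_mul]
    have : B + s • D = M * (1 + (s - s₀) • N) := by
      rw [Matrix.mul_add, Matrix.mul_one, hMD, hM]
      rw [add_assoc, ← add_smul]
      ring_nf
    rw [this, det_mul, Matrix.det_one_add_smul]
  have c1 : HasDerivAt (fun s : ℝ => s - s₀) 1 s₀ := (hasDerivAt_id s₀).sub_const s₀
  have c2 : HasDerivAt (fun s : ℝ => p.eval (s - s₀)) (p.derivative.eval 0 * 1) s₀ := by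
    have h0 : HasDerivAt (fun x => eval x p) (eval 0 (derivative p)) (s₀ - s₀) := by
      simpa using p.hasDerivAt (0:ℝ)
    have := HasDerivAt.comp (h := fun s : ℝ => s - s₀) s₀ h0 c1
    exact this
  have c3 : HasDerivAt (fun s : ℝ => (s - s₀)^2) ((2:ℕ) * (s₀ - s₀)^1 * 1) s₀ := c1.pow 2
  have c4 := c2.mul c3
  have c5 := ((c1.const_mul N.trace).const_add 1).add c4
  have c6 := c5.const_mul M.det
  have hval : M.det * (N.trace * 1 + (p.derivative.eval 0 * 1 * (s₀ - s₀) ^ 2 +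
      p.eval (s₀ - s₀) * ((2:ℕ) * (s₀ - s₀) ^ 1 * 1))) = M.det * N.trace := by ring_nf
  rw [hval] at c6
  have hfun : (fun s : ℝ => M.det * (1 + N.trace * (s - s₀) + p.eval (s - s₀) * (s - s₀)^2))
      = fun s => (B + s • D).det := by
    funext s; rw [key s]
  rw [← hfun]
  exact c6

lemma hasDerivAt_logdet (B D : Matrix (Fin n) (Fin n) ℝ) (s₀ : ℝ)
    (hpd : (B + s₀ • D).PosDef) :
    HasDerivAt (fun s => Real.log (B + s • D).det) (((B + s₀ • D)⁻¹ * D).trace) s₀ := by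
  have hdet : IsUnit (B + s₀ • D).det := isUnit_iff_ne_zero.mpr (ne_of_gt hpd.det_pos)
  have h := (hasDerivAt_det_affine B D s₀ hdet).log (ne_of_gt hpd.det_pos)
  have : (B + s₀ • D).det * ((B + s₀ • D)⁻¹ * D).trace / (B + s₀ • D).det
      = ((B + s₀ • D)⁻¹ * D).trace := by
    rw [mul_comm, mul_div_assoc, div_self (ne_of_gt hpd.det_pos), mul_one]
  rwa [this] at h

end Stmt5Aux

open Stmt5Aux

/-- upper bound for `log det` of a convex
combination of positive definite real symmetric matrices. -/
theorem stmt_5 {n : ℕ} (A B : Matrix (Fin n) (Fin n) ℝ)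
    (hA : A.PosDef) (hB : B.PosDef) (t : ℝ) (ht : t ∈ Set.Icc (0:ℝ) 1) :
    Real.log (t • A + (1 - t) • B).det
      ≤ t * Real.log A.det + (1 - t) * Real.log B.det
        + t * (1 - t) / (2 * min ((⨅ i, hA.1.eigenvalues i)^2) ((⨅ i, hB.1.eigenvalues i)^2))
          * Matrix.trace ((A - B)ᵀ * (A - B)) := by
  rcases Nat.eq_zero_or_pos n with hn | hn
  · subst hn
    simp [Matrix.det_fin_zero, Matrix.trace]
  haveI : NeZero n := ⟨hn.ne'⟩
  obtain ⟨ht0, ht1⟩ := ht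
  set D : Matrix (Fin n) (Fin n) ℝ := A - B with hD
  set mA : ℝ := ⨅ i, hA.1.eigenvalues i with hmA
  set mB : ℝ := ⨅ i, hB.1.eigenvalues i with hmB
  set m : ℝ := min mA mB with hm
  -- positivity of the infima
  have hinf_pos : ∀ (C : Matrix (Fin n) (Fin n) ℝ) (hC : C.PosDef),
      0 < ⨅ i, hC.1.eigenvalues i := by
    intro C hC
    obtain ⟨i₀, hi₀⟩ := Finite.exists_min (fun i => hC.1.eigenvalues i)
    have : (⨅ i, hC.1.eigenvalues i) = hC.1.eigenvalues i₀ :=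
      le_antisymm (ciInf_le (Finite.bddBelow_range _) i₀) (le_ciInf hi₀)
    rw [this]
    exact hC.eigenvalues_pos i₀
  have hmA_pos : 0 < mA := hinf_pos A hA
  have hmB_pos : 0 < mB := hinf_pos B hB
  have hm_pos : 0 < m := lt_min hmA_pos hmB_pos
  have hmin_sq : min (mA^2) (mB^2) = m^2 := by
    rcases le_total mA mB with h | h
    · rw [hm, min_eq_left h, min_eq_left (by nlinarith : mA^2 ≤ mB^2)]
    · rw [hm, min_eq_right h, min_eq_right (by nlinarith : mB^2 ≤ mA^2)]
  -- D is symmetric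
  have hDH : Dᴴ = D := (hA.1.sub hB.1).eq
  have hDT : Dᵀ = D := hDH
  -- A - m•1 and B - m•1 are PSD
  have hsub_psd : ∀ (C : Matrix (Fin n) (Fin n) ℝ) (hC : C.PosDef),
      m ≤ (⨅ i, hC.1.eigenvalues i) → (C - m • 1).PosSemidef := by
    intro C hC hle
    have h1 := sub_inf_smul_posSemidef hC.1
    have h2 : C - m • (1 : Matrix (Fin n) (Fin n) ℝ)
        = (C - (⨅ i, hC.1.eigenvalues i) • 1) + (((⨅ i, hC.1.eigenvalues i) - m) • 1) := by
      rw [sub_smul]; abel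
    rw [h2]
    exact h1.add (psd_smul Matrix.PosSemidef.one (by linarith))
  have hA_sub : (A - m • 1).PosSemidef := hsub_psd A hA (min_le_left _ _)
  have hB_sub : (B - m • 1).PosSemidef := hsub_psd B hB (min_le_right _ _)
  -- M s - m • 1 is PSD for s ∈ [0,1]
  have hM_sub : ∀ s ∈ Set.Icc (0:ℝ) 1, ((B + s • D) - m • 1).PosSemidef := by
    intro s hs
    have hid : B + s • D - m • (1 : Matrix (Fin n) (Fin n) ℝ)
        = s • (A - m • 1) + (1 - s) • (B - m • 1) := by
      rw [hD]; module
    rw [hid]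
    exact (psd_smul hA_sub hs.1).add (psd_smul hB_sub (by linarith [hs.2]))
  -- m • 1 is PD
  have hm1_pd : (m • (1 : Matrix (Fin n) (Fin n) ℝ)).PosDef := by
    rw [Matrix.smul_one_eq_diagonal]
    exact Matrix.PosDef.diagonal (fun i => hm_pos)
  have hMpd : ∀ s ∈ Set.Icc (0:ℝ) 1, (B + s • D).PosDef := by
    intro s hs
    have : B + s • D = ((B + s • D) - m • 1) + m • 1 := by abel
    rw [this]
    exact Matrix.PosDef.posSemidef_add (hM_sub s hs) hm1_pd
  -- trace of D * D
  have hDD_psd : (D * D).PosSemidef := by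
    have := Matrix.posSemidef_conjTranspose_mul_self D
    rwa [hDH] at this
  set K : ℝ := (D * D).trace / m^2 with hK
  -- bound on the second-order trace term
  have hT_bound : ∀ u v : ℝ, u ∈ Set.Icc (0:ℝ) 1 → v ∈ Set.Icc (0:ℝ) 1 →
      ((B + v • D)⁻¹ * D * (B + u • D)⁻¹ * D).trace ≤ K := by
    intro u v hu hv
    have hQ1 : (D * (B + u • D)⁻¹ * D).PosSemidef := by
      have := ((hMpd u hu).posSemidef.inv).conjTranspose_mul_mul_same D
      rwa [hDH] at this
    have h1 : ((B + v • D)⁻¹ * (D * (B + u • D)⁻¹ * D)).trace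
        ≤ (1/m) * (D * (B + u • D)⁻¹ * D).trace :=
      trace_inv_mul_le (hMpd v hv) hm_pos (hM_sub v hv) hQ1
    have h2 : (D * (B + u • D)⁻¹ * D).trace = ((B + u • D)⁻¹ * (D * D)).trace := by
      rw [Matrix.trace_mul_cycle, ← mul_assoc, Matrix.trace_mul_comm, ← mul_assoc]
    have h3 : ((B + u • D)⁻¹ * (D * D)).trace ≤ (1/m) * (D * D).trace :=
      trace_inv_mul_le (hMpd u hu) hm_pos (hM_sub u hu) hDD_psd
    have hassoc : (B + v • D)⁻¹ * D * (B + u • D)⁻¹ * D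
        = (B + v • D)⁻¹ * (D * (B + u • D)⁻¹ * D) := by
      rw [← mul_assoc, ← mul_assoc]
    rw [hassoc]
    have hfin : (1/m) * (D * (B + u • D)⁻¹ * D).trace ≤ (1/m) * ((1/m) * (D * D).trace) := by
      rw [h2]
      exact mul_le_mul_of_nonneg_left h3 (by positivity)
    have : (1/m) * ((1/m) * (D * D).trace) = K := by
      rw [hK]; ring
    linarith
  -- the function and its derivative
  set g : ℝ → ℝ := fun s => Real.log (B + s • D).det with hg
  set h : ℝ → ℝ := fun s => g s + K/2 * s^2 with hh
  have hh_deriv : ∀ s ∈ Set.Icc (0:ℝ) 1,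
      HasDerivAt h (((B + s • D)⁻¹ * D).trace + K * s) s := by
    intro s hs
    have hgd : HasDerivAt g (((B + s • D)⁻¹ * D).trace) s :=
      hasDerivAt_logdet B D s (hMpd s hs)
    have hq : HasDerivAt (fun x : ℝ => K/2 * x^2) (K * s) s := by
      have := (hasDerivAt_pow 2 s).const_mul (K/2)
      refine this.congr_deriv ?_
      push_cast
      ring
    exact hgd.add hq
  -- continuity on [0,1]
  have hcont : ContinuousOn h (Set.Icc (0:ℝ) 1) := by
    have hcd : Continuous fun s : ℝ => (B + s • D).det :=
      Continuous.matrix_det (continuous_const.add (continuous_id.smul continuous_const))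
    have hcg : ContinuousOn g (Set.Icc (0:ℝ) 1) :=
      ContinuousOn.log hcd.continuousOn (fun s hs => ne_of_gt (hMpd s hs).det_pos)
    exact hcg.add (continuous_const.mul (continuous_pow 2)).continuousOn
  -- differentiability on the interior
  have hdiff : DifferentiableOn ℝ h (interior (Set.Icc (0:ℝ) 1)) := by
    rw [interior_Icc]
    intro s hs
    exact ((hh_deriv s (Set.Ioo_subset_Icc_self hs)).differentiableAt).differentiableWithinAt
  have hderiv_eq : ∀ s ∈ Set.Ioo (0:ℝ) 1,
      deriv h s = ((B + s • D)⁻¹ * D).trace + K * s := fun s hs =>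
    (hh_deriv s (Set.Ioo_subset_Icc_self hs)).deriv
  -- monotonicity of the derivative
  have hmono : MonotoneOn (deriv h) (interior (Set.Icc (0:ℝ) 1)) := by
    rw [interior_Icc]
    intro u hu v hv huv
    rw [hderiv_eq u hu, hderiv_eq v hv]
    have hu' : u ∈ Set.Icc (0:ℝ) 1 := Set.Ioo_subset_Icc_self hu
    have hv' : v ∈ Set.Icc (0:ℝ) 1 := Set.Ioo_subset_Icc_self hv
    have hdetu : IsUnit (B + u • D).det := isUnit_iff_ne_zero.mpr (ne_of_gt (hMpd u hu').det_pos)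
    have hdetv : IsUnit (B + v • D).det := isUnit_iff_ne_zero.mpr (ne_of_gt (hMpd v hv').det_pos)
    have hMsub : (B + u • D) - (B + v • D) = (u - v) • D := by module
    have hinv_diff : (B + v • D)⁻¹ - (B + u • D)⁻¹
        = (u - v) • ((B + v • D)⁻¹ * D * (B + u • D)⁻¹) := by
      have : (B + v • D)⁻¹ - (B + u • D)⁻¹
          = (B + v • D)⁻¹ * ((B + u • D) - (B + v • D)) * (B + u • D)⁻¹ := by
        rw [Matrix.mul_sub, Matrix.sub_mul, mul_assoc,
          Matrix.mul_nonsing_inv _ hdetu, Matrix.mul_one,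
          Matrix.nonsing_inv_mul _ hdetv, Matrix.one_mul]
      rw [this, hMsub, Matrix.mul_smul, Matrix.smul_mul]
    have htr : ((B + v • D)⁻¹ * D).trace - ((B + u • D)⁻¹ * D).trace
        = (u - v) * ((B + v • D)⁻¹ * D * (B + u • D)⁻¹ * D).trace := by
      rw [← Matrix.trace_sub, ← Matrix.sub_mul, hinv_diff, Matrix.smul_mul,
        Matrix.trace_smul, smul_eq_mul]
    have hTb := hT_bound u v hu' hv'
    nlinarith [mul_nonneg (sub_nonneg.mpr huv)
      (sub_nonneg.mpr hTb)]
  have hconv : ConvexOn ℝ (Set.Icc (0:ℝ) 1) h :=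
    MonotoneOn.convexOn_of_deriv (convex_Icc 0 1) hcont hdiff hmono
  have happ := hconv.2 (Set.mem_Icc.mpr ⟨zero_le_one, le_refl 1⟩)
    (Set.mem_Icc.mpr ⟨le_refl 0, zero_le_one⟩) ht0 (by linarith : (0:ℝ) ≤ 1 - t)
    (by ring : t + (1 - t) = 1)
  have harg : t • (1:ℝ) + (1 - t) • (0:ℝ) = t := by simp
  rw [harg] at happ
  -- evaluate h at t, 1, 0
  have hM1 : B + (1:ℝ) • D = A := by rw [hD]; module
  have hM0 : B + (0:ℝ) • D = B := by rw [hD]; module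
  have hMt : B + t • D = t • A + (1 - t) • B := by rw [hD]; module
  have hht : h t = Real.log (t • A + (1 - t) • B).det + K/2 * t^2 := by
    rw [hh]; simp only [hg, hMt]
  have hh1 : h 1 = Real.log A.det + K/2 := by
    rw [hh]; simp only [hg, hM1]; ring
  have hh0 : h 0 = Real.log B.det := by
    rw [hh]; simp only [hg, hM0]; ring
  rw [hht, hh1, hh0] at happ
  simp only [smul_eq_mul] at happ
  -- conclude
  rw [hDT, hmin_sq]
  have hcoef : t * (1 - t) / (2 * m^2) * (D * D).trace = K/2 * (t - t^2) := by
    rw [hK]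
    field_simp
  rw [hcoef]
  nlinarith [happ]
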